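/- arXiv:math/0312095 — 4 statements merged into one kernel-verified Lean document; each statement's English description precedes it below -/
import Mathlib

section
/- Rearrangement identity: Let P ⊆ ℚ^d be a full-dimensional simple polytope, ξ ∈ (ℚ^d)^* generic, and v a vertex of P. Then (−1)^{ind_ξ(v)} · 1_{T^ξ_v P} = Σ_F (−1)^{dim F} · 1_{T_F P}, where the sum is over all faces F of P that contain v and on which ξ attains its maximum at v (i.e., ξ(x) ≤ ξ(v) for all x ∈ F). -/
noncomputable section
open Classical

open scoped BigOperators

/-- Indicator function of a set, with values in `ℤ`. -/
def indicator {d : ℕ} (S : Set (Fin d → ℚ)) (x : Fin d → ℚ) : ℤ :=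
  if x ∈ S then 1 else 0

/-- A polytope is the convex hull of a finite set of points. -/
def IsPolytope {d : ℕ} (P : Set (Fin d → ℚ)) : Prop :=
  ∃ T : Finset (Fin d → ℚ), P = convexHull ℚ (T : Set (Fin d → ℚ))

/-- A face of `P` is the set of maximizers of a linear functional over `P`. -/
def IsFace {d : ℕ} (P F : Set (Fin d → ℚ)) : Prop :=
  ∃ ℓ : Module.Dual ℚ (Fin d → ℚ), F = {x ∈ P | ∀ y ∈ P, ℓ y ≤ ℓ x}

/-- A vertex is a point whose singleton is a face. -/
def IsVertex {d : ℕ} (P : Set (Fin d → ℚ)) (v : Fin d → ℚ) : Prop :=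
  IsFace P {v}

/-- The tangent cone of `P` at a face `F`. -/
def tangentCone {d : ℕ} (P F : Set (Fin d → ℚ)) : Set (Fin d → ℚ) :=
  {y | ∃ f ∈ F, ∃ x : Fin d → ℚ, y = f + x ∧ ∃ ε : ℚ, 0 < ε ∧ f + ε • x ∈ P}

/-- The simplicial cone `v + ℚ_{≥0} t_1 + … + ℚ_{≥0} t_d`. -/
def simpleCone {d : ℕ} (v : Fin d → ℚ) (t : Fin d → Fin d → ℚ) : Set (Fin d → ℚ) :=
  {x | ∃ lam : Fin d → ℚ, (∀ i, 0 ≤ lam i) ∧ x = v + ∑ i, lam i • t i}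

/-- `P` is simple, with edge directions `t v` at each vertex `v`. -/
def IsSimpleWith {d : ℕ} (P : Set (Fin d → ℚ))
    (t : (Fin d → ℚ) → Fin d → Fin d → ℚ) : Prop :=
  ∀ v, IsVertex P v →
    LinearIndependent ℚ (t v) ∧ tangentCone P {v} = simpleCone v (t v)

/-- The polarized tangent cone
`v + Σ_{ξ(t_i)>0} ℚ_{≥0} t_i + Σ_{ξ(t_i)<0} ℚ_{<0} t_i`. -/
def polarizedCone {d : ℕ} (v : Fin d → ℚ) (t : Fin d → Fin d → ℚ)
    (ξ : Module.Dual ℚ (Fin d → ℚ)) : Set (Fin d → ℚ) :=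
  {x | ∃ lam : Fin d → ℚ, x = v + ∑ i, lam i • t i ∧
    ∀ i, (0 < ξ (t i) → 0 ≤ lam i) ∧ (ξ (t i) < 0 → lam i < 0)}

/-- The index of a vertex: the number of `ξ`-negative edge directions. -/
def indAt {d : ℕ} (ξ : Module.Dual ℚ (Fin d → ℚ)) (t : Fin d → Fin d → ℚ) : ℕ :=
  (Finset.univ.filter fun i => ξ (t i) < 0).card

/-- Dimension of the affine hull of a set. -/
def faceDim {d : ℕ} (F : Set (Fin d → ℚ)) : ℕ :=
  Module.finrank ℚ (affineSpan ℚ F).direction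


variable {d : ℕ}

def lam (v : Fin d → ℚ) (B : Module.Basis (Fin d) ℚ (Fin d → ℚ)) (x : Fin d → ℚ) (i : Fin d) : ℚ :=
  B.repr (x - v) i

section prev
variable (v : Fin d → ℚ) (B : Module.Basis (Fin d) ℚ (Fin d → ℚ))
lemma sum_lam (x : Fin d → ℚ) : v + ∑ i, lam v B x i • B i = x := by
  unfold lam; rw [B.sum_repr (x - v)]; abel
lemma lam_eq (c : Fin d → ℚ) : lam v B (v + ∑ i, c i • B i) = c := by
  funext i; unfold lam
  have : (v + ∑ i, c i • B i) - v = ∑ i, c i • B i := by abel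
  rw [this, B.repr_sum_self]
lemma lam_add (u : Fin d → ℚ) : lam v B (v + u) = B.repr u := by
  funext i; unfold lam
  have : v + u - v = u := by abel
  rw [this]
lemma lam_self : lam v B v = 0 := by
  funext i; unfold lam; simp
lemma lam_add_pt (f x : Fin d → ℚ) (i : Fin d) :
    lam v B (f + x) i = lam v B f i + B.repr x i := by
  unfold lam
  have : f + x - v = (f - v) + x := by abel
  rw [this, map_add]; simp
end prev

variable {P : Set (Fin d → ℚ)} {v : Fin d → ℚ} {B : Module.Basis (Fin d) ℚ (Fin d → ℚ)}

lemma mem_simpleCone (x : Fin d → ℚ) : x ∈ simpleCone v ⇑B ↔ ∀ i, 0 ≤ lam v B x i := by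
  constructor
  · rintro ⟨c, hc, rfl⟩ i; rw [lam_eq]; exact hc i
  · intro h; exact ⟨lam v B x, h, (sum_lam v B x).symm⟩

lemma mem_tangent_vertex (P : Set (Fin d → ℚ)) (v y : Fin d → ℚ) :
    y ∈ tangentCone P {v} ↔ ∃ ε : ℚ, 0 < ε ∧ v + ε • (y - v) ∈ P := by
  constructor
  · rintro ⟨f, hf, x, rfl, ε, hε, hP⟩
    rcases hf with rfl
    exact ⟨ε, hε, by simpa using hP⟩
  · rintro ⟨ε, hε, hP⟩
    exact ⟨v, rfl, y - v, by abel, ε, hε, hP⟩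

lemma seg_mem (hconv : Convex ℚ P) {p q : Fin d → ℚ} (hp : p ∈ P) (hq : q ∈ P) {s : ℚ}
    (h0 : 0 ≤ s) (h1 : s ≤ 1) : p + s • (q - p) ∈ P := by
  have h := hconv hp hq (by linarith : (0:ℚ) ≤ 1 - s) h0 (by ring)
  convert h using 1
  module

lemma P_lam_nonneg (hcone : tangentCone P {v} = simpleCone v ⇑B) {x : Fin d → ℚ} (hx : x ∈ P) :
    ∀ i, 0 ≤ lam v B x i := by
  rw [← mem_simpleCone, ← hcone, mem_tangent_vertex]
  exact ⟨1, one_pos, by simpa⟩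

lemma scale_mem (hcone : tangentCone P {v} = simpleCone v ⇑B) {z : Fin d → ℚ}
    (hz : ∀ i, 0 ≤ lam v B z i) : ∃ ε : ℚ, 0 < ε ∧ v + ε • (z - v) ∈ P := by
  rw [← mem_tangent_vertex, hcone, mem_simpleCone]
  exact hz

lemma scale_mem_le (hconv : Convex ℚ P) (hvP : v ∈ P)
    (hcone : tangentCone P {v} = simpleCone v ⇑B) {z : Fin d → ℚ}
    (hz : ∀ i, 0 ≤ lam v B z i) :
    ∃ ε : ℚ, 0 < ε ∧ ∀ s : ℚ, 0 ≤ s → s ≤ ε → v + s • (z - v) ∈ P := by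
  obtain ⟨ε, hε, hmem⟩ := scale_mem hcone hz
  refine ⟨ε, hε, fun s h0 h1 => ?_⟩
  have := seg_mem hconv hvP hmem (s := s / ε) (by positivity) (by rw [div_le_one hε]; exact h1)
  convert this using 2
  have h2 : v + ε • (z - v) - v = ε • (z - v) := by abel
  rw [h2, smul_smul, div_mul_cancel₀ _ (ne_of_gt hε)]

lemma lam_edge (ε : ℚ) (i j : Fin d) :
    lam v B (v + ε • B i) j = if i = j then ε else 0 := by
  rw [lam_add, map_smul, B.repr_self]
  simp [Finsupp.single_apply]

lemma edge_point (hcone : tangentCone P {v} = simpleCone v ⇑B) (i : Fin d) :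
    ∃ ε : ℚ, 0 < ε ∧ v + ε • B i ∈ P := by
  have hz : ∀ j, 0 ≤ lam v B (v + (1:ℚ) • B i) j := by
    intro j; rw [lam_edge]; split <;> norm_num
  obtain ⟨ε, hε, hmem⟩ := scale_mem hcone hz
  refine ⟨ε, hε, ?_⟩
  have h2 : v + (1:ℚ) • B i - v = B i := by simp
  rw [h2] at hmem
  convert hmem using 2

/-- The candidate faces. -/
def FF (P : Set (Fin d → ℚ)) (v : Fin d → ℚ) (B : Module.Basis (Fin d) ℚ (Fin d → ℚ))
    (S : Finset (Fin d)) : Set (Fin d → ℚ) :=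
  {x | x ∈ P ∧ ∀ i ∉ S, lam v B x i = 0}

/-- The candidate tangent cones. -/
def DD (v : Fin d → ℚ) (B : Module.Basis (Fin d) ℚ (Fin d → ℚ)) (S : Finset (Fin d)) :
    Set (Fin d → ℚ) :=
  {x | ∀ i ∉ S, 0 ≤ lam v B x i}

lemma v_mem_FF (hvP : v ∈ P) (S : Finset (Fin d)) : v ∈ FF P v B S :=
  ⟨hvP, fun i _ => by rw [lam_self]; rfl⟩

lemma edge_mem_FF (hcone : tangentCone P {v} = simpleCone v ⇑B) {i : Fin d}
    {S : Finset (Fin d)} (hi : i ∈ S) :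
    ∃ ε : ℚ, 0 < ε ∧ v + ε • B i ∈ FF P v B S := by
  obtain ⟨ε, hε, hmem⟩ := edge_point hcone i
  refine ⟨ε, hε, hmem, fun j hj => ?_⟩
  rw [lam_edge]
  rw [if_neg]
  rintro rfl; exact hj hi

lemma FF_inj (hcone : tangentCone P {v} = simpleCone v ⇑B) :
    Function.Injective (FF P v B) := by
  have key : ∀ S S' : Finset (Fin d), FF P v B S = FF P v B S' → ∀ i ∈ S, i ∈ S' := by
    intro S S' hSS' i hi
    obtain ⟨ε, hε, hmem⟩ := edge_mem_FF hcone hi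
    rw [hSS'] at hmem
    by_contra hni
    have := hmem.2 i hni
    rw [lam_edge, if_pos rfl] at this
    exact absurd this (ne_of_gt hε)
  intro S S' h
  exact Finset.Subset.antisymm (fun i hi => key S S' h i hi) (fun i hi => key S' S h.symm i hi)

lemma dual_apply (ℓ : Module.Dual ℚ (Fin d → ℚ)) (x : Fin d → ℚ) :
    ℓ x = ℓ v + ∑ i, lam v B x i * ℓ (B i) := by
  conv_lhs => rw [← sum_lam v B x]
  rw [map_add, map_sum]
  simp [smul_eq_mul]

lemma FF_isFace (hvP : v ∈ P) (hcone : tangentCone P {v} = simpleCone v ⇑B)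
    (S : Finset (Fin d)) : IsFace P (FF P v B S) := by
  set ℓ : Module.Dual ℚ (Fin d → ℚ) := -∑ i ∈ Sᶜ, B.coord i with hℓdef
  have hℓB : ∀ j, ℓ (B j) = if j ∈ S then 0 else -1 := by
    intro j
    rw [hℓdef]
    simp only [LinearMap.neg_apply, LinearMap.coe_sum, Finset.sum_apply, Module.Basis.coord_apply,
      B.repr_self]
    rw [Finset.sum_congr rfl (fun i _ => Finsupp.single_apply (a := j) (b := (1:ℚ)))]
    rw [Finset.sum_ite_eq Sᶜ j (fun _ => (1:ℚ))]
    by_cases h : j ∈ S <;> simp [h]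
  have hle : ∀ y ∈ P, ℓ y ≤ ℓ v := by
    intro y hy
    rw [dual_apply ℓ y]
    have : ∑ i, lam v B y i * ℓ (B i) ≤ 0 := by
      apply Finset.sum_nonpos
      intro i _
      rw [hℓB i]
      have := P_lam_nonneg hcone hy i
      split <;> nlinarith
    linarith
  refine ⟨ℓ, ?_⟩
  ext x
  constructor
  · rintro ⟨hxP, hx0⟩
    have hsum : ∑ i, lam v B x i * ℓ (B i) = 0 := by
      apply Finset.sum_eq_zero
      intro i _
      rw [hℓB i]
      by_cases h : i ∈ S
      · simp [h]
      · simp [h, hx0 i h]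
    have hx : ℓ x = ℓ v := by rw [dual_apply ℓ x, hsum]; ring
    exact ⟨hxP, fun y hy => hx ▸ hle y hy⟩
  · rintro ⟨hxP, hmax⟩
    refine ⟨hxP, ?_⟩
    have h1 : ℓ v ≤ ℓ x := hmax v hvP
    have h2 : ℓ x ≤ ℓ v := hle x hxP
    have hsum : ∑ i, lam v B x i * ℓ (B i) = 0 := by
      have := dual_apply (v := v) (B := B) ℓ x
      linarith
    have hterms := (Finset.sum_eq_zero_iff_of_nonpos (fun i _ => by
      rw [hℓB i]
      have := P_lam_nonneg hcone hxP i
      split <;> nlinarith)).mp hsum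
    intro i hi
    have := hterms i (Finset.mem_univ i)
    rw [hℓB i, if_neg hi] at this
    linarith

lemma FF_max (hcone : tangentCone P {v} = simpleCone v ⇑B)
    (ξ : Module.Dual ℚ (Fin d → ℚ)) {S : Finset (Fin d)}
    (hS : ∀ i ∈ S, ξ (B i) < 0) :
    ∀ y ∈ FF P v B S, ξ y ≤ ξ v := by
  rintro y ⟨hyP, hy0⟩
  rw [dual_apply ξ y]
  have : ∑ i, lam v B y i * ξ (B i) ≤ 0 := by
    apply Finset.sum_nonpos
    intro i _
    by_cases h : i ∈ S
    · have := P_lam_nonneg hcone hyP i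
      nlinarith [hS i h]
    · simp [hy0 i h]
  linarith

lemma face_eq_FF (hvP : v ∈ P) (hcone : tangentCone P {v} = simpleCone v ⇑B)
    (ξ : Module.Dual ℚ (Fin d → ℚ)) (hgen : ∀ i, ξ (B i) ≠ 0)
    {F : Set (Fin d → ℚ)} (hF : IsFace P F) (hvF : v ∈ F) (hmax : ∀ y ∈ F, ξ y ≤ ξ v) :
    ∃ S : Finset (Fin d), (∀ i ∈ S, ξ (B i) < 0) ∧ F = FF P v B S := by
  obtain ⟨ℓ, rfl⟩ := hF
  have hvmax : ∀ y ∈ P, ℓ y ≤ ℓ v := hvF.2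
  have hneg : ∀ i, ℓ (B i) ≤ 0 := by
    intro i
    obtain ⟨ε, hε, hmem⟩ := edge_point hcone i
    have := hvmax _ hmem
    rw [map_add, map_smul, smul_eq_mul] at this
    nlinarith
  refine ⟨Finset.univ.filter (fun i => ℓ (B i) = 0), ?_, ?_⟩
  · intro i hi
    rw [Finset.mem_filter] at hi
    obtain ⟨ε, hε, hmem⟩ := edge_point hcone i
    have hedge_face : v + ε • B i ∈ {x | x ∈ P ∧ ∀ y ∈ P, ℓ y ≤ ℓ x} := by
      refine ⟨hmem, fun y hy => ?_⟩
      rw [map_add, map_smul, smul_eq_mul, hi.2]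
      have := hvmax y hy
      linarith
    have := hmax _ hedge_face
    rw [map_add, map_smul, smul_eq_mul] at this
    have h1 : ξ (B i) ≤ 0 := by nlinarith
    exact lt_of_le_of_ne h1 (hgen i)
  · ext x
    constructor
    · rintro ⟨hxP, hxmax⟩
      have h1 : ℓ v ≤ ℓ x := hxmax v hvP
      have h2 : ℓ x ≤ ℓ v := hvmax x hxP
      have hsum : ∑ i, lam v B x i * ℓ (B i) = 0 := by
        have := dual_apply (v := v) (B := B) ℓ x
        linarith
      have hterms := (Finset.sum_eq_zero_iff_of_nonpos (fun i _ => by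
        have := P_lam_nonneg hcone hxP i
        nlinarith [hneg i])).mp hsum
      refine ⟨hxP, fun i hi => ?_⟩
      rw [Finset.mem_filter] at hi
      push_neg at hi
      have hne : ℓ (B i) ≠ 0 := hi (Finset.mem_univ i)
      have := hterms i (Finset.mem_univ i)
      rcases mul_eq_zero.mp this with h | h
      · exact h
      · exact absurd h hne
    · rintro ⟨hxP, hx0⟩
      refine ⟨hxP, fun y hy => ?_⟩
      have hx : ℓ x = ℓ v := by
        rw [dual_apply ℓ x]
        have : ∑ i, lam v B x i * ℓ (B i) = 0 := by
          apply Finset.sum_eq_zero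
          intro i _
          by_cases h : ℓ (B i) = 0
          · simp [h]
          · have : i ∉ Finset.univ.filter (fun i => ℓ (B i) = 0) := by
              simp [h]
            simp [hx0 i this]
        rw [this]; ring
      rw [hx]
      exact hvmax y hy

lemma tangent_FF (hconv : Convex ℚ P) (hvP : v ∈ P)
    (hcone : tangentCone P {v} = simpleCone v ⇑B) (S : Finset (Fin d)) :
    tangentCone P (FF P v B S) = DD v B S := by
  ext y
  constructor
  · rintro ⟨f, ⟨hfP, hf0⟩, x, rfl, ε, hε, hP⟩
    intro i hi
    have h1 : lam v B (f + ε • x) i = lam v B f i + ε * B.repr x i := by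
      rw [lam_add_pt, map_smul]; simp
    have h2 : 0 ≤ lam v B (f + ε • x) i := P_lam_nonneg hcone hP i
    rw [h1, hf0 i hi] at h2
    have h3 : 0 ≤ B.repr x i := by nlinarith
    rw [lam_add_pt, hf0 i hi]
    linarith
  · intro hy
    -- setup
    obtain ⟨u, hu⟩ : ∃ u : Fin d → ℚ, u = y - v := ⟨_, rfl⟩
    have hyv : y = v + u := by rw [hu]; abel
    obtain ⟨w, hw⟩ : ∃ w : Fin d → ℚ, w = ∑ i ∈ S, B i := ⟨_, rfl⟩
    have hreprw : ∀ j, B.repr w j = if j ∈ S then 1 else 0 := by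
      intro j
      rw [hw, map_sum]
      simp only [Finset.sum_apply', B.repr_self]
      rw [Finset.sum_congr rfl (fun i _ => Finsupp.single_apply (a := i) (b := (1:ℚ)))]
      exact Finset.sum_ite_eq' S j (fun _ => (1:ℚ))
    obtain ⟨M, hM⟩ : ∃ M : ℚ, M = 1 + ∑ i, |lam v B y i| := ⟨_, rfl⟩
    have hM1 : 1 ≤ M := by
      rw [hM]
      have : 0 ≤ ∑ i, |lam v B y i| := Finset.sum_nonneg (fun i _ => abs_nonneg _)
      linarith
    have hMge : ∀ i, -lam v B y i ≤ M := by
      intro i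
      have h1 : |lam v B y i| ≤ ∑ j, |lam v B y j| :=
        Finset.single_le_sum (f := fun j => |lam v B y j|) (fun j _ => abs_nonneg _)
          (Finset.mem_univ i)
      have := neg_abs_le (lam v B y i)
      rw [hM]; linarith
    -- the point z
    have hz : ∀ j, 0 ≤ lam v B (v + (M • w + u)) j := by
      intro j
      rw [lam_add, map_add, map_smul]
      simp only [Finsupp.coe_add, Finsupp.coe_smul, Pi.add_apply, Pi.smul_apply, smul_eq_mul,
        hreprw j]
      have hrepru : B.repr u j = lam v B y j := by rw [hu]; rfl
      rw [hrepru]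
      by_cases h : j ∈ S
      · simp only [h, if_true, mul_one]
        have := hMge j
        linarith
      · simp only [h, if_false, mul_zero, zero_add]
        exact hy j h
    obtain ⟨η₀, hη₀, hmemz⟩ := scale_mem hcone hz
    have hzv : v + (M • w + u) - v = M • w + u := by abel
    rw [hzv] at hmemz
    -- the segment toward w
    have hzw : ∀ j, 0 ≤ lam v B (v + w) j := by
      intro j
      rw [lam_add, hreprw j]
      split <;> norm_num
    obtain ⟨ε₀, hε₀, hseg⟩ := scale_mem_le hconv hvP hcone hzw
    have hwv : v + w - v = w := by abel
    rw [hwv] at hseg  -- hseg might not rewrite since under binder; check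
    -- choose η
    obtain ⟨η, hηdef⟩ : ∃ η : ℚ, η = min η₀ (min (1/2) (ε₀ / (2 * M))) := ⟨_, rfl⟩
    have hM0 : (0:ℚ) < M := by linarith
    have hηpos : 0 < η := by
      rw [hηdef]
      apply lt_min hη₀
      apply lt_min (by norm_num)
      exact div_pos hε₀ (by linarith)
    have hηle : η ≤ η₀ := hηdef ▸ min_le_left _ _
    have hηhalf : η ≤ 1/2 := hηdef ▸ le_trans (min_le_right _ _) (min_le_left _ _)
    have hηM : η ≤ ε₀ / (2 * M) := hηdef ▸ le_trans (min_le_right _ _) (min_le_right _ _)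
    have h1η : (1:ℚ)/2 ≤ 1 - η := by linarith
    obtain ⟨δ, hδdef⟩ : ∃ δ : ℚ, δ = η * M / (1 - η) := ⟨_, rfl⟩
    have hδ0 : 0 ≤ δ := by
      rw [hδdef]
      apply div_nonneg
      · exact mul_nonneg hηpos.le (by linarith)
      · linarith
    have h2M : η * (2 * M) ≤ ε₀ := by
      rwa [le_div_iff₀ (by linarith : (0:ℚ) < 2 * M)] at hηM
    have hδε₀ : δ ≤ ε₀ := by
      rw [hδdef, div_le_iff₀ (by linarith : (0:ℚ) < 1 - η)]
      nlinarith [h2M, hηhalf, hε₀]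
    -- the point f
    obtain ⟨f, hf⟩ : ∃ f : Fin d → ℚ, f = v + δ • w := ⟨_, rfl⟩
    have hfP : f ∈ P := by
      have := hseg δ hδ0 hδε₀
      rwa [hf]
    have hfFF : f ∈ FF P v B S := by
      refine ⟨hfP, fun j hj => ?_⟩
      rw [hf, lam_add, map_smul]
      simp only [Finsupp.coe_smul, Pi.smul_apply, smul_eq_mul, hreprw j]
      rw [if_neg hj, mul_zero]
    -- membership in P of the moved point
    have hkey : f + η • (y - f) ∈ P := by
      have hq : v + (η/η₀) • (η₀ • (M • w + u)) ∈ P := by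
        have h := seg_mem hconv hvP hmemz (s := η/η₀) (by positivity)
          (by rw [div_le_one hη₀]; exact hηle)
        have h' : v + η₀ • (M • w + u) - v = η₀ • (M • w + u) := by abel
        rwa [h'] at h
      have hscal : (η/η₀) • (η₀ • (M • w + u)) = η • (M • w + u) := by
        rw [smul_smul, div_mul_cancel₀ _ (ne_of_gt hη₀)]
      rw [hscal] at hq
      have hδη : δ * (1 - η) = η * M := by
        rw [hδdef, div_mul_cancel₀]
        linarith
      have : f + η • (y - f) = v + η • (M • w + u) := by
        rw [hf, hyv]
        have expand : (v + δ • w) + η • ((v + u) - (v + δ • w))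
            = v + (δ * (1 - η)) • w + η • u := by module
        rw [expand, hδη]
        module
      rw [this]
      exact hq
    exact ⟨f, hfFF, y - f, by abel, η, hηpos, hkey⟩

lemma faceDim_FF (hvP : v ∈ P) (hcone : tangentCone P {v} = simpleCone v ⇑B)
    (S : Finset (Fin d)) :
    Module.finrank ℚ (affineSpan ℚ (FF P v B S)).direction = S.card := by
  have hsub : ∀ x ∈ FF P v B S, x - v ∈ Submodule.span ℚ (⇑B '' ↑S) := by
    rintro x ⟨hxP, hx0⟩
    have hx : x - v = ∑ i ∈ S, lam v B x i • B i := by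
      have h := sum_lam v B x
      have h2 : x - v = ∑ i, lam v B x i • B i := by
        conv_lhs => rw [← h]
        abel
      rw [h2]
      symm
      apply Finset.sum_subset (Finset.subset_univ S)
      intro i _ hi
      rw [hx0 i hi, zero_smul]
    rw [hx]
    exact Submodule.sum_mem _ (fun i hi =>
      Submodule.smul_mem _ _ (Submodule.subset_span ⟨i, hi, rfl⟩))
  have hdir : (affineSpan ℚ (FF P v B S)).direction = Submodule.span ℚ (⇑B '' ↑S) := by
    rw [direction_affineSpan]
    apply le_antisymm
    · apply Submodule.span_le.mpr
      rintro z ⟨p, hp, q, hq, rfl⟩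
      show p -ᵥ q ∈ _
      have heq : p -ᵥ q = (p - v) - (q - v) := by rw [vsub_eq_sub]; abel
      rw [heq]
      exact Submodule.sub_mem _ (hsub p hp) (hsub q hq)
    · apply Submodule.span_le.mpr
      rintro z ⟨i, hi, rfl⟩
      obtain ⟨ε, hε, hmem⟩ := edge_mem_FF hcone (by exact_mod_cast hi)
      have hB : B i = ε⁻¹ • ((v + ε • B i) -ᵥ v) := by
        rw [vsub_eq_sub]
        have : v + ε • B i - v = ε • B i := by abel
        rw [this, smul_smul, inv_mul_cancel₀ (ne_of_gt hε), one_smul]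
      rw [hB]
      exact Submodule.smul_mem _ _
        (vsub_mem_vectorSpan ℚ hmem (v_mem_FF hvP S))
  rw [hdir]
  have hli : LinearIndependent ℚ (fun i : ↥S => B (i : Fin d)) :=
    B.linearIndependent.comp _ Subtype.val_injective
  have hrange : Set.range (fun i : ↥S => B (i : Fin d)) = ⇑B '' ↑S := by
    ext z
    simp
  rw [← hrange, finrank_span_eq_card hli, Fintype.card_coe]



def cc {d : ℕ} (v : Fin d → ℚ) (B : Module.Basis (Fin d) ℚ (Fin d → ℚ)) (x : Fin d → ℚ)
    (i : Fin d) : ℤ :=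
  if 0 ≤ lam v B x i then 1 else 0

def dd {d : ℕ} (v : Fin d → ℚ) (B : Module.Basis (Fin d) ℚ (Fin d → ℚ)) (x : Fin d → ℚ)
    (i : Fin d) : ℤ :=
  if lam v B x i < 0 then 1 else 0

variable {P : Set (Fin d → ℚ)} {v : Fin d → ℚ} {B : Module.Basis (Fin d) ℚ (Fin d → ℚ)}

lemma indicator_DD (x : Fin d → ℚ) (S : Finset (Fin d)) :
    indicator (DD v B S) x = ∏ i ∈ Finset.univ \ S, cc v B x i := by
  by_cases hall : ∀ i ∉ S, 0 ≤ lam v B x i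
  · rw [indicator, if_pos (show x ∈ DD v B S from hall)]
    symm
    apply Finset.prod_eq_one
    intro i hi
    rw [Finset.mem_sdiff] at hi
    rw [cc, if_pos (hall i hi.2)]
  · rw [indicator, if_neg (show x ∉ DD v B S from hall)]
    push_neg at hall
    obtain ⟨i, hiS, hneg⟩ := hall
    symm
    apply Finset.prod_eq_zero (Finset.mem_sdiff.mpr ⟨Finset.mem_univ i, hiS⟩)
    rw [cc, if_neg (not_le.mpr hneg)]

lemma mem_polarized (ξ : Module.Dual ℚ (Fin d → ℚ)) (x : Fin d → ℚ) :
    x ∈ polarizedCone v ⇑B ξ ↔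
      ∀ i, (0 < ξ (B i) → 0 ≤ lam v B x i) ∧ (ξ (B i) < 0 → lam v B x i < 0) := by
  constructor
  · rintro ⟨c, hc, hcond⟩
    have : lam v B x = c := by rw [hc, lam_eq]
    rw [this]
    exact hcond
  · intro h
    exact ⟨lam v B x, (sum_lam v B x).symm, h⟩

lemma indicator_polarized (ξ : Module.Dual ℚ (Fin d → ℚ)) (hgenB : ∀ i, ξ (B i) ≠ 0)
    {N : Finset (Fin d)} (hN : N = Finset.univ.filter fun i => ξ (B i) < 0)
    (x : Fin d → ℚ) :
    indicator (polarizedCone v ⇑B ξ) x =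
      (∏ i ∈ N, dd v B x i) * ∏ i ∈ Finset.univ \ N, cc v B x i := by
  have hmemN : ∀ i, i ∈ N ↔ ξ (B i) < 0 := by
    intro i; rw [hN, Finset.mem_filter]; simp
  by_cases hall : ∀ i, (0 < ξ (B i) → 0 ≤ lam v B x i) ∧ (ξ (B i) < 0 → lam v B x i < 0)
  · rw [indicator, if_pos ((mem_polarized ξ x).mpr hall)]
    rw [Finset.prod_eq_one, Finset.prod_eq_one]
    · norm_num
    · intro i hi
      rw [Finset.mem_sdiff] at hi
      have hpos : 0 < ξ (B i) := by
        rcases lt_or_gt_of_ne (hgenB i) with h | h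
        · exact absurd ((hmemN i).mpr h) hi.2
        · exact h
      rw [cc, if_pos ((hall i).1 hpos)]
    · intro i hi
      rw [dd, if_pos ((hall i).2 ((hmemN i).mp hi))]
  · rw [indicator, if_neg (fun hmem => hall ((mem_polarized ξ x).mp hmem))]
    rw [not_forall] at hall
    obtain ⟨i, hni⟩ := hall
    by_cases hiN : i ∈ N
    · have hξ : ξ (B i) < 0 := (hmemN i).mp hiN
      have h1 : (0 < ξ (B i) → 0 ≤ lam v B x i) := fun h => absurd h (asymm hξ)
      have h2 : ¬ (lam v B x i < 0) := by
        by_contra h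
        exact hni ⟨h1, fun _ => h⟩
      rw [Finset.prod_eq_zero hiN (by rw [dd, if_neg h2]), zero_mul]
    · have hξ : 0 < ξ (B i) := by
        rcases lt_or_gt_of_ne (hgenB i) with h | h
        · exact absurd ((hmemN i).mpr h) hiN
        · exact h
      have h2 : (ξ (B i) < 0 → lam v B x i < 0) := fun h => absurd h (asymm hξ)
      have h1 : ¬ (0 ≤ lam v B x i) := by
        by_contra h
        exact hni ⟨fun _ => h, h2⟩
      rw [Finset.prod_eq_zero (Finset.mem_sdiff.mpr ⟨Finset.mem_univ i, hiN⟩)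
        (by rw [cc, if_neg h1]), mul_zero]

lemma neg_add_cc (x : Fin d → ℚ) (i : Fin d) : (-1 : ℤ) + cc v B x i = -(dd v B x i) := by
  rw [cc, dd]
  by_cases h : 0 ≤ lam v B x i
  · rw [if_pos h, if_neg (not_lt.mpr h)]
    norm_num
  · rw [if_neg h, if_pos (lt_of_not_ge h)]
    norm_num


/-- **Rearrangement identity**: the signed indicator of the polarized tangent cone
at a vertex `v` equals the alternating sum of the indicators of the tangent cones of
the faces containing `v` on which `ξ` attains its maximum at `v`. -/
theorem rearrangement {d : ℕ} (hd : 1 ≤ d) (P : Set (Fin d → ℚ))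
    (hP : IsPolytope P) (hfull : affineSpan ℚ P = ⊤)
    (t : (Fin d → ℚ) → Fin d → Fin d → ℚ) (hsimple : IsSimpleWith P t)
    (ξ : Module.Dual ℚ (Fin d → ℚ))
    (hgen : ∀ v, IsVertex P v → ∀ i, ξ (t v i) ≠ 0)
    (v : Fin d → ℚ) (hv : IsVertex P v) :
    ∀ x : Fin d → ℚ,
      (-1 : ℤ) ^ indAt ξ (t v) * indicator (polarizedCone v (t v) ξ) x =
        ∑ᶠ F ∈ {F : Set (Fin d → ℚ) | IsFace P F ∧ v ∈ F ∧ ∀ y ∈ F, ξ y ≤ ξ v},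
          (-1 : ℤ) ^ faceDim F * indicator (tangentCone P F) x := by
  intro x
  haveI : Nonempty (Fin d) := ⟨⟨0, hd⟩⟩
  obtain ⟨hli, hconeT⟩ := hsimple v hv
  set B : Module.Basis (Fin d) ℚ (Fin d → ℚ) :=
    basisOfLinearIndependentOfCardEqFinrank hli
      (by simp [Module.finrank_fintype_fun_eq_card]) with hBdef
  have hBt : ⇑B = t v := coe_basisOfLinearIndependentOfCardEqFinrank _ _
  have hcone : tangentCone P {v} = simpleCone v ⇑B := by rw [hBt]; exact hconeT
  have hconv : Convex ℚ P := by
    obtain ⟨T, rfl⟩ := hP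
    exact convex_convexHull ℚ _
  have hvP : v ∈ P := by
    obtain ⟨ℓ₀, h₀⟩ := hv
    have hmem : v ∈ {x | x ∈ P ∧ ∀ y ∈ P, ℓ₀ y ≤ ℓ₀ x} := h₀ ▸ rfl
    exact hmem.1
  have hgenB : ∀ i, ξ (B i) ≠ 0 := by
    intro i
    rw [show (B i) = t v i from congrFun hBt i]
    exact hgen v hv i
  rw [← hBt]
  obtain ⟨N, hN⟩ : ∃ N : Finset (Fin d), N = Finset.univ.filter fun i => ξ (B i) < 0 :=
    ⟨_, rfl⟩
  have hmemN : ∀ i, i ∈ N ↔ ξ (B i) < 0 := by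
    intro i; rw [hN, Finset.mem_filter]; simp
  -- identify the face set
  have hsetequal : {F : Set (Fin d → ℚ) | IsFace P F ∧ v ∈ F ∧ ∀ y ∈ F, ξ y ≤ ξ v}
      = FF P v B '' ↑(N.powerset) := by
    ext F
    simp only [Set.mem_setOf_eq, Set.mem_image, Finset.mem_coe, Finset.mem_powerset]
    constructor
    · rintro ⟨hF, hvF, hmax⟩
      obtain ⟨S, hSneg, rfl⟩ := face_eq_FF hvP hcone ξ hgenB hF hvF hmax
      exact ⟨S, fun i hi => (hmemN i).mpr (hSneg i hi), rfl⟩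
    · rintro ⟨S, hS, rfl⟩
      exact ⟨FF_isFace hvP hcone S, v_mem_FF hvP S,
        FF_max hcone ξ (fun i hi => (hmemN i).mp (hS hi))⟩
  rw [hsetequal, finsum_mem_image (FF_inj hcone).injOn, finsum_mem_coe_finset]
  -- rewrite each summand
  have hterm : ∀ S ∈ N.powerset,
      (-1 : ℤ) ^ faceDim (FF P v B S) * indicator (tangentCone P (FF P v B S)) x
        = ((∏ i ∈ S, (-1 : ℤ)) * ∏ i ∈ N \ S, cc v B x i) *
            ∏ i ∈ Finset.univ \ N, cc v B x i := by
    intro S hS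
    rw [Finset.mem_powerset] at hS
    have h1 : faceDim (FF P v B S) = S.card := faceDim_FF hvP hcone S
    have h2 : tangentCone P (FF P v B S) = DD v B S := tangent_FF hconv hvP hcone S
    have hsplit : Finset.univ \ S = (N \ S) ∪ (Finset.univ \ N) := by
      ext i
      simp only [Finset.mem_sdiff, Finset.mem_union, Finset.mem_univ, true_and]
      constructor
      · intro hi
        by_cases h : i ∈ N
        · exact Or.inl ⟨h, hi⟩
        · exact Or.inr h
      · rintro (⟨_, h⟩ | h)
        · exact h
        · exact fun hiS => h (hS hiS)
    have hdisj : Disjoint (N \ S) (Finset.univ \ N) := by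
      rw [Finset.disjoint_left]
      intro i h1' h2'
      exact (Finset.mem_sdiff.mp h2').2 (Finset.mem_sdiff.mp h1').1
    rw [h1, h2, indicator_DD, hsplit, Finset.prod_union hdisj, Finset.prod_const,
      mul_comm ((-1 : ℤ) ^ S.card)]
    ring
  rw [Finset.sum_congr rfl hterm, ← Finset.sum_mul, ← Finset.prod_add,
    Finset.prod_congr rfl (fun i _ => neg_add_cc x i),
    indicator_polarized ξ hgenB hN x]
  have hcard : indAt ξ ⇑B = N.card := by
    unfold indAt
    rw [hN]
  have hprodneg : (∏ i ∈ N, -(dd v B x i)) = (-1 : ℤ) ^ N.card * ∏ i ∈ N, dd v B x i := by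
    rw [Finset.prod_congr rfl (fun i _ => (neg_eq_neg_one_mul (dd v B x i))),
      Finset.prod_mul_distrib, Finset.prod_const]
  rw [hcard, hprodneg]
  ring
end
end

section
/- Independence of the polarizing functional modulo cones with lines: Let P ⊆ ℚ^d be a full-dimensional simple polytope, v a vertex of P, and ξ_1, ξ_2 ∈ (ℚ^d)^* both generic. Then (−1)^{ind_{ξ_1}(v)} · 1_{T^{ξ_1}_v P} − (−1)^{ind_{ξ_2}(v)} · 1_{T^{ξ_2}_v P} is a finite integer linear combination of indicator functions of convex cones each of which contains an affine line. -/
noncomputable section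
open Classical

open scoped BigOperators

/-- `K` contains an affine line. -/
def ContainsLine {d : ℕ} (K : Set (Fin d → ℚ)) : Prop :=
  ∃ x ∈ K, ∃ u : Fin d → ℚ, u ≠ 0 ∧ ∀ lam : ℚ, x + lam • u ∈ K

/-- `K` is a convex cone with apex `a`. -/
def IsConvexConeAt {d : ℕ} (a : Fin d → ℚ) (K : Set (Fin d → ℚ)) : Prop :=
  Convex ℚ K ∧ ∀ x ∈ K, ∀ lam : ℚ, 0 < lam → a + lam • (x - a) ∈ K

theorem polarized_aux {d : ℕ} (hd : 1 ≤ d) (v : Fin d → ℚ) (tv : Fin d → Fin d → ℚ)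
    (hli : LinearIndependent ℚ tv)
    (ξ₁ ξ₂ : Module.Dual ℚ (Fin d → ℚ))
    (hg₁ : ∀ i, ξ₁ (tv i) ≠ 0) (hg₂ : ∀ i, ξ₂ (tv i) ≠ 0) :
    ∃ (m : ℕ) (K : Fin m → Set (Fin d → ℚ)) (c : Fin m → ℤ),
      (∀ j, (∃ a, IsConvexConeAt a (K j)) ∧ ContainsLine (K j)) ∧
      ∀ x : Fin d → ℚ,
        (-1 : ℤ) ^ indAt ξ₁ tv * indicator (polarizedCone v tv ξ₁) x -
          (-1 : ℤ) ^ indAt ξ₂ tv * indicator (polarizedCone v tv ξ₂) x =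
        ∑ j, c j * indicator (K j) x := by
  classical
  haveI : Nonempty (Fin d) := ⟨⟨0, hd⟩⟩
  have hcard : Fintype.card (Fin d) = Module.finrank ℚ (Fin d → ℚ) := by simp
  set b : Module.Basis (Fin d) ℚ (Fin d → ℚ) :=
    basisOfLinearIndependentOfCardEqFinrank hli hcard with hbdef
  have hb : ∀ i, b i = tv i := fun i => by
    rw [hbdef, coe_basisOfLinearIndependentOfCardEqFinrank]
  set coord : (Fin d → ℚ) → Fin d → ℚ := fun x i => b.repr (x - v) i with hcoorddef
  -- representation
  have hrepr : ∀ x : Fin d → ℚ, x = v + ∑ i, coord x i • tv i := by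
    intro x
    have h1 : ∑ i, coord x i • b i = x - v := b.sum_repr (x - v)
    have h2 : (∑ i, coord x i • tv i) = ∑ i, coord x i • b i := by
      refine Finset.sum_congr rfl fun i _ => by rw [hb]
    rw [h2, h1]; abel
  have huniq : ∀ (lam : Fin d → ℚ) (x : Fin d → ℚ),
      x = v + ∑ i, lam i • tv i → lam = coord x := by
    intro lam x hx
    have h2 : (∑ i, lam i • tv i) = ∑ i, lam i • b i := by
      refine Finset.sum_congr rfl fun i _ => by rw [hb]
    have h3 : x - v = ∑ i, lam i • b i := by rw [hx, h2]; abel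
    have h4 : ⇑(b.repr (∑ i, lam i • b i)) = lam := b.repr_sum_self lam
    funext i
    rw [hcoorddef]
    simp only [h3, h4]
  -- membership characterization
  have hmemiff : ∀ (ξ : Module.Dual ℚ (Fin d → ℚ)) (x : Fin d → ℚ),
      x ∈ polarizedCone v tv ξ ↔
        ∀ i, (0 < ξ (tv i) → 0 ≤ coord x i) ∧ (ξ (tv i) < 0 → coord x i < 0) := by
    intro ξ x
    constructor
    · rintro ⟨lam, hx, hcond⟩
      have := huniq lam x hx
      subst this
      exact hcond
    · intro h
      exact ⟨coord x, hrepr x, h⟩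
  -- signed indicator product formula
  have hsign : ∀ (ξ : Module.Dual ℚ (Fin d → ℚ)), (∀ i, ξ (tv i) ≠ 0) → ∀ x : Fin d → ℚ,
      (-1 : ℤ) ^ indAt ξ tv * indicator (polarizedCone v tv ξ) x =
        ∏ i, ((if 0 ≤ coord x i then (1 : ℤ) else 0) - (if ξ (tv i) < 0 then 1 else 0)) := by
    intro ξ hg x
    have hpow : (-1 : ℤ) ^ indAt ξ tv =
        ∏ i, (if ξ (tv i) < 0 then (-1 : ℤ) else 1) := by
      rw [Finset.prod_ite (fun _ => (-1 : ℤ)) (fun _ => (1 : ℤ))]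
      simp [indAt]
    have hind : indicator (polarizedCone v tv ξ) x =
        ∏ i, (if 0 < ξ (tv i) then (if 0 ≤ coord x i then (1 : ℤ) else 0)
              else (if coord x i < 0 then 1 else 0)) := by
      by_cases hx : x ∈ polarizedCone v tv ξ
      · have hc := (hmemiff ξ x).mp hx
        rw [indicator, if_pos hx]
        symm
        refine Finset.prod_eq_one fun i _ => ?_
        rcases lt_trichotomy (ξ (tv i)) 0 with h | h | h
        · rw [if_neg (by linarith), if_pos ((hc i).2 h)]
        · exact absurd h (hg i)
        · rw [if_pos h, if_pos ((hc i).1 h)]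
      · rw [indicator, if_neg hx]
        have hnf : ¬ ∀ i, (0 < ξ (tv i) → 0 ≤ coord x i) ∧ (ξ (tv i) < 0 → coord x i < 0) :=
          fun h => hx ((hmemiff ξ x).mpr h)
        obtain ⟨i, hi⟩ := not_forall.mp hnf
        symm
        refine Finset.prod_eq_zero (Finset.mem_univ i) ?_
        rcases lt_trichotomy (ξ (tv i)) 0 with h | h | h
        · have hcc : ¬ coord x i < 0 := by
            intro hcc
            exact hi ⟨fun hp => absurd h (by linarith), fun _ => hcc⟩
          rw [if_neg (by linarith), if_neg hcc]
        · exact absurd h (hg i)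
        · have hcc : ¬ 0 ≤ coord x i := by
            intro hcc
            exact hi ⟨fun _ => hcc, fun hn => absurd h (by linarith)⟩
          rw [if_pos h, if_neg hcc]
    rw [hpow, hind, ← Finset.prod_mul_distrib]
    refine Finset.prod_congr rfl fun i _ => ?_
    rcases lt_trichotomy (ξ (tv i)) 0 with h | h | h
    · split_ifs <;> first | (exfalso; linarith) | norm_num
    · exact absurd h (hg i)
    · split_ifs <;> first | (exfalso; linarith) | norm_num
  -- expansion over subsets
  have hexp : ∀ (ξ : Module.Dual ℚ (Fin d → ℚ)), (∀ i, ξ (tv i) ≠ 0) → ∀ x : Fin d → ℚ,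
      (-1 : ℤ) ^ indAt ξ tv * indicator (polarizedCone v tv ξ) x =
        ∑ s ∈ (Finset.univ : Finset (Fin d)).powerset,
          (∏ i ∈ s, (-(if ξ (tv i) < 0 then (1 : ℤ) else 0))) *
            ∏ i ∈ Finset.univ \ s, (if 0 ≤ coord x i then (1 : ℤ) else 0) := by
    intro ξ hg x
    have h1 : (∏ i, ((if 0 ≤ coord x i then (1 : ℤ) else 0) - (if ξ (tv i) < 0 then 1 else 0)))
        = ∑ s ∈ (Finset.univ : Finset (Fin d)).powerset,
          (∏ i ∈ s, (-(if ξ (tv i) < 0 then (1 : ℤ) else 0))) *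
            ∏ i ∈ Finset.univ \ s, (if 0 ≤ coord x i then (1 : ℤ) else 0) := by
      rw [← Finset.prod_add]
      exact Finset.prod_congr rfl fun i _ => by ring
    rw [hsign ξ hg x, h1]
  -- the cones
  set Kset : Finset (Fin d) → Set (Fin d → ℚ) :=
    fun s => {x | ∀ i ∉ s, 0 ≤ coord x i} with hKdef
  have hKind : ∀ (s : Finset (Fin d)) (x : Fin d → ℚ),
      (∏ i ∈ Finset.univ \ s, (if 0 ≤ coord x i then (1 : ℤ) else 0)) = indicator (Kset s) x := by
    intro s x
    rw [Finset.prod_boole, indicator]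
    congr 1
    simp only [Finset.mem_sdiff, Finset.mem_univ, true_and, hKdef, Set.mem_setOf_eq, eq_iff_iff]
    try tauto
  -- coord linearity facts
  have hcoord_combo : ∀ (x y : Fin d → ℚ) (a bb : ℚ), a + bb = 1 →
      ∀ i, coord (a • x + bb • y) i = a * coord x i + bb * coord y i := by
    intro x y a bb hab i
    have h1 : a • x + bb • y - v = a • (x - v) + bb • (y - v) := by
      have hv' : a • v + bb • v = v := by rw [← add_smul, hab, one_smul]
      rw [smul_sub, smul_sub, sub_add_sub_comm, hv']
    simp only [hcoorddef, h1, map_add, map_smul, Finsupp.add_apply, Finsupp.smul_apply,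
      smul_eq_mul]
  have hcoord_ray : ∀ (x : Fin d → ℚ) (lam : ℚ) i,
      coord (v + lam • (x - v)) i = lam * coord x i := by
    intro x lam i
    have h1 : v + lam • (x - v) - v = lam • (x - v) := by abel
    simp only [hcoorddef, h1, map_smul, Finsupp.smul_apply, smul_eq_mul]
  have hcoord_v : ∀ i, coord v i = 0 := by
    intro i
    simp [hcoorddef]
  have hcoord_line : ∀ (i₀ : Fin d) (lam : ℚ) i,
      coord (v + lam • tv i₀) i = if i₀ = i then lam else 0 := by
    intro i₀ lam i
    have h1 : v + lam • tv i₀ - v = lam • b i₀ := by rw [hb]; abel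
    simp only [hcoorddef, h1, map_smul, Finsupp.smul_apply, smul_eq_mul, Module.Basis.repr_self,
      Finsupp.single_apply]
    split <;> simp
  -- properties of Kset for nonempty s
  have hKprop : ∀ s : Finset (Fin d), s ≠ ∅ →
      (∃ a, IsConvexConeAt a (Kset s)) ∧ ContainsLine (Kset s) := by
    intro s hs
    obtain ⟨i₀, hi₀⟩ := Finset.nonempty_iff_ne_empty.mpr hs
    constructor
    · refine ⟨v, ?_, ?_⟩
      · intro x hx y hy a bb ha hb' hab i hi
        have := hcoord_combo x y a bb hab i
        rw [this]
        exact add_nonneg (mul_nonneg ha (hx i hi)) (mul_nonneg hb' (hy i hi))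
      · intro x hx lam hlam i hi
        rw [hcoord_ray]
        exact mul_nonneg hlam.le (hx i hi)
    · refine ⟨v, fun i _ => by rw [hcoord_v], tv i₀, hli.ne_zero i₀, fun lam i hi => ?_⟩
      rw [hcoord_line]
      have : i₀ ≠ i := fun h => hi (h ▸ hi₀)
      rw [if_neg this]
  -- coefficients
  set cf : Finset (Fin d) → ℤ := fun s =>
    (∏ i ∈ s, (-(if ξ₁ (tv i) < 0 then (1 : ℤ) else 0))) -
      (∏ i ∈ s, (-(if ξ₂ (tv i) < 0 then (1 : ℤ) else 0))) with hcfdef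
  have hcf_empty : cf ∅ = 0 := by simp [hcfdef]
  -- main pointwise identity over subsets
  have hmain : ∀ x : Fin d → ℚ,
      (-1 : ℤ) ^ indAt ξ₁ tv * indicator (polarizedCone v tv ξ₁) x -
        (-1 : ℤ) ^ indAt ξ₂ tv * indicator (polarizedCone v tv ξ₂) x =
      ∑ s ∈ ((Finset.univ : Finset (Fin d)).powerset.erase ∅),
        cf s * indicator (Kset s) x := by
    intro x
    rw [hexp ξ₁ hg₁ x, hexp ξ₂ hg₂ x, ← Finset.sum_sub_distrib]
    rw [Finset.sum_erase (s := (Finset.univ : Finset (Fin d)).powerset)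
      (f := fun s => cf s * indicator (Kset s) x) (a := ∅) (by simp [hcf_empty])]
    refine Finset.sum_congr rfl fun s _ => ?_
    rw [← hKind s x, hcfdef]
    ring
  -- index by Fin m
  set SS := ((Finset.univ : Finset (Fin d)).powerset.erase ∅) with hSSdef
  refine ⟨SS.card, fun j => Kset (SS.equivFin.symm j : Finset (Fin d)),
    fun j => cf (SS.equivFin.symm j : Finset (Fin d)), ?_, ?_⟩
  · intro j
    have hmem := (SS.equivFin.symm j).2
    have hne : ((SS.equivFin.symm j : Finset (Fin d))) ≠ ∅ :=
      (Finset.mem_erase.mp hmem).1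
    exact hKprop _ hne
  · intro x
    rw [hmain x]
    rw [← Finset.sum_attach SS (fun s => cf s * indicator (Kset s) x)]
    exact (Equiv.sum_comp SS.equivFin.symm
      (fun s : {a // a ∈ SS} => cf s * indicator (Kset s) x)).symm

/-- **Independence of the polarizing functional modulo cones with lines**: for a vertex
`v` of a simple polytope and two generic functionals `ξ₁, ξ₂`, the difference of the
signed indicators of the two polarized tangent cones is an integer linear combination
of indicators of convex cones, each containing an affine line. -/
theorem polarized_cones_indep_of_xi {d : ℕ} (hd : 1 ≤ d) (P : Set (Fin d → ℚ))
    (hP : IsPolytope P) (hfull : affineSpan ℚ P = ⊤)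
    (t : (Fin d → ℚ) → Fin d → Fin d → ℚ) (hsimple : IsSimpleWith P t)
    (ξ₁ ξ₂ : Module.Dual ℚ (Fin d → ℚ))
    (hgen₁ : ∀ v, IsVertex P v → ∀ i, ξ₁ (t v i) ≠ 0)
    (hgen₂ : ∀ v, IsVertex P v → ∀ i, ξ₂ (t v i) ≠ 0)
    (v : Fin d → ℚ) (hv : IsVertex P v) :
    ∃ (m : ℕ) (K : Fin m → Set (Fin d → ℚ)) (c : Fin m → ℤ),
      (∀ j, (∃ a, IsConvexConeAt a (K j)) ∧ ContainsLine (K j)) ∧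
      ∀ x : Fin d → ℚ,
        (-1 : ℤ) ^ indAt ξ₁ (t v) * indicator (polarizedCone v (t v) ξ₁) x -
          (-1 : ℤ) ^ indAt ξ₂ (t v) * indicator (polarizedCone v (t v) ξ₂) x =
        ∑ j, c j * indicator (K j) x := by
  exact polarized_aux hd v (t v) (hsimple v hv).1 ξ₁ ξ₂ (hgen₁ v hv) (hgen₂ v hv)
end
end

section
/- Tangent cone as intersection over a subdivision of the normal cone: Let P ⊆ ℚ^d be a full-dimensional polytope, v a vertex, and N_v = {n ∈ (ℚ^d)^* : n(x) ≥ n(v) for all x ∈ P} its normal cone. Suppose σ_1,…,σ_M ⊆ (ℚ^d)^* are cones, each generated by finitely many elements of N_v, whose union is N_v. Then the tangent cone satisfies T_v P = ∩_{i=1}^M T_{σ_i}, where T_{σ_i} = {x ∈ ℚ^d : n(x) ≥ n(v) for all n ∈ σ_i}. -/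
noncomputable section
open Classical

open scoped BigOperators

/-- The (inner) normal cone of `P` at `v`. -/
def normalCone {d : ℕ} (P : Set (Fin d → ℚ)) (v : Fin d → ℚ) :
    Set (Module.Dual ℚ (Fin d → ℚ)) :=
  {n | ∀ x ∈ P, n v ≤ n x}


private lemma farkas_aux {d : ℕ} (k : ℕ) (g : Fin k → (Fin d → ℚ)) (x : Fin d → ℚ)
    (h : ¬ ∃ c : Fin k → ℚ, (∀ j, 0 ≤ c j) ∧ x = ∑ j, c j • g j) :
    ∃ n : Module.Dual ℚ (Fin d → ℚ), (∀ j, 0 ≤ n (g j)) ∧ n x < 0 := by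
  induction k generalizing x with
  | zero =>
      have hx : x ≠ 0 := by
        intro h0
        exact h ⟨fun j => 0, fun j => le_refl 0, by simp [h0]⟩
      obtain ⟨i, hi⟩ : ∃ i, x i ≠ 0 := by
        by_contra hc
        push_neg at hc
        exact hx (funext hc)
      refine ⟨(-(x i)) • LinearMap.proj i, fun j => j.elim0, ?_⟩
      have h1 : ((-(x i)) • (LinearMap.proj i : (Fin d → ℚ) →ₗ[ℚ] ℚ)) x = -(x i * x i) := by
        simp [LinearMap.proj_apply]
      rw [h1]
      nlinarith [mul_self_pos.mpr hi]
  | succ k ih =>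
      set a := g (Fin.last k) with ha
      set g' : Fin k → (Fin d → ℚ) := fun j => g j.castSucc with hg'
      have hx' : ¬ ∃ c : Fin k → ℚ, (∀ j, 0 ≤ c j) ∧ x = ∑ j, c j • g' j := by
        rintro ⟨c, hc0, hcx⟩
        refine h ⟨Fin.snoc c 0, ?_, ?_⟩
        · intro j
          refine Fin.lastCases ?_ ?_ j
          · simp
          · intro j; simpa using hc0 j
        · rw [Fin.sum_univ_castSucc]
          simp [hcx]
          rfl
      obtain ⟨n, hn0, hnx⟩ := ih g' x hx'
      by_cases hna : 0 ≤ n a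
      · refine ⟨n, ?_, hnx⟩
        intro j
        refine Fin.lastCases ?_ ?_ j
        · exact hna
        · exact hn0
      · push_neg at hna
        set L : (Fin d → ℚ) →ₗ[ℚ] (Fin d → ℚ) :=
          LinearMap.id - (n a)⁻¹ • (n.smulRight a) with hL
        have hLz : ∀ z, L z = z - ((n a)⁻¹ * n z) • a := by
          intro z; simp [hL, smul_smul, sub_eq_add_neg]
        have hy : ¬ ∃ c : Fin k → ℚ, (∀ j, 0 ≤ c j) ∧ L x = ∑ j, c j • (L ∘ g') j := by
          rintro ⟨c, hc0, hcx⟩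
          set t : ℚ := (n a)⁻¹ * (n x - ∑ j, c j * n (g' j)) with hT
          have ht : 0 ≤ t := by
            have h1 : n x - ∑ j, c j * n (g' j) < 0 := by
              have : 0 ≤ ∑ j, c j * n (g' j) :=
                Finset.sum_nonneg fun j _ => mul_nonneg (hc0 j) (hn0 j)
              linarith
            have h2 : (n a)⁻¹ < 0 := inv_neg''.mpr hna
            nlinarith
          refine h ⟨Fin.snoc c t, ?_, ?_⟩
          · intro j
            refine Fin.lastCases ?_ ?_ j
            · simpa using ht
            · intro j; simpa using hc0 j
          · rw [Fin.sum_univ_castSucc]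
            simp only [Fin.snoc_castSucc, Fin.snoc_last, ← ha]
            have hx2 : x = L x + ((n a)⁻¹ * n x) • a := by
              rw [hLz]; abel
            have key : ∑ j, c j • (⇑L ∘ g') j
                = ∑ j, c j • g' j - (∑ j, c j * ((n a)⁻¹ * n (g' j))) • a := by
              simp only [Function.comp_apply, hLz, smul_sub, smul_smul,
                Finset.sum_sub_distrib, Finset.sum_smul]
            have hS : t = (n a)⁻¹ * n x - ∑ j, c j * ((n a)⁻¹ * n (g' j)) := by
              rw [hT, mul_sub]
              congr 1
              rw [Finset.mul_sum]
              exact Finset.sum_congr rfl fun j _ => by ring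
            show x = (∑ j, c j • g' j) + t • a
            rw [hx2, hcx, key, hS, sub_smul]
            abel
        obtain ⟨m, hm0, hmy⟩ := ih (L ∘ g') (L x) hy
        refine ⟨m.comp L, ?_, hmy⟩
        intro j
        refine Fin.lastCases ?_ ?_ j
        · have : L a = 0 := by
            rw [hLz]
            rw [inv_mul_cancel₀ (ne_of_lt hna), one_smul, sub_self]
          simp [← ha, LinearMap.comp_apply, this]
        · intro j
          exact hm0 j

private lemma tangent_le_aux {d : ℕ} (P : Set (Fin d → ℚ)) (v : Fin d → ℚ)
    (n : Module.Dual ℚ (Fin d → ℚ)) (hn : ∀ x ∈ P, n v ≤ n x)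
    (y : Fin d → ℚ) (hy : y ∈ tangentCone P {v}) :
    n v ≤ n y := by
  obtain ⟨f, hf, x, hyx, ε, hε, hmem⟩ := hy
  rw [Set.mem_singleton_iff] at hf
  subst hf
  have h1 := hn _ hmem
  rw [map_add, map_smul, smul_eq_mul] at h1
  have h2 : 0 ≤ n x := by nlinarith
  rw [hyx, map_add]
  linarith

/-- **Tangent cone as intersection over a subdivision of the normal cone**: if the
cones `σ_1, …, σ_M`, each finitely generated by elements of the normal cone `N_v`,
cover `N_v`, then `T_v P = ∩_i T_{σ_i}` where
`T_{σ_i} = {x : n(x) ≥ n(v) for all n ∈ σ_i}`. -/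
theorem tangent_cone_eq_iInter {d : ℕ} (hd : 1 ≤ d) (P : Set (Fin d → ℚ))
    (hP : IsPolytope P) (hfull : affineSpan ℚ P = ⊤)
    (v : Fin d → ℚ) (hv : IsVertex P v)
    (M : ℕ) (σ : Fin M → Set (Module.Dual ℚ (Fin d → ℚ)))
    (hgen : ∀ i, ∃ (k : ℕ) (g : Fin k → Module.Dual ℚ (Fin d → ℚ)),
      (∀ j, g j ∈ normalCone P v) ∧
      σ i = {n | ∃ c : Fin k → ℚ, (∀ j, 0 ≤ c j) ∧ n = ∑ j, c j • g j})
    (hcover : (⋃ i, σ i) = normalCone P v) :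
    tangentCone P {v} = ⋂ i, {x : Fin d → ℚ | ∀ n ∈ σ i, n v ≤ n x} := by
  obtain ⟨T, hT⟩ := hP
  obtain ⟨ℓ, hℓ⟩ := hv
  have hvP : v ∈ P := by
    have h0 : v ∈ ({v} : Set (Fin d → ℚ)) := rfl
    rw [hℓ] at h0
    exact h0.1
  have hsub : ∀ i, σ i ⊆ normalCone P v := by
    intro i n hni
    obtain ⟨k, g, hgN, hσ⟩ := hgen i
    rw [hσ] at hni
    obtain ⟨c, hc0, hcn⟩ := hni
    intro p hp
    have hnq : ∀ q : Fin d → ℚ, n q = ∑ j, c j * (g j) q := by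
      intro q
      rw [hcn]
      simp [LinearMap.sum_apply, LinearMap.smul_apply, smul_eq_mul]
    rw [hnq v, hnq p]
    exact Finset.sum_le_sum fun j _ =>
      mul_le_mul_of_nonneg_left (hgN j p hp) (hc0 j)
  ext y
  rw [Set.mem_iInter]
  constructor
  · intro hy i n hni
    exact tangent_le_aux P v n (hsub i hni) y hy
  · intro hy
    have hN : ∀ n : Module.Dual ℚ (Fin d → ℚ), (∀ x ∈ P, n v ≤ n x) → n v ≤ n y := by
      intro n hn
      have : n ∈ ⋃ i, σ i := by rw [hcover]; exact hn
      obtain ⟨_, ⟨i, rfl⟩, hni⟩ := this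
      exact hy i n hni
    set x : Fin d → ℚ := y - v with hx
    set k := T.card with hk
    set t : Fin k → (Fin d → ℚ) := fun j => ((T.equivFin.symm j : T) : Fin d → ℚ) with ht
    have htm : ∀ j, t j ∈ T := fun j => (T.equivFin.symm j).2
    set g : Fin k → (Fin d → ℚ) := fun j => t j - v with hg
    have hxc : ∃ c : Fin k → ℚ, (∀ j, 0 ≤ c j) ∧ x = ∑ j, c j • g j := by
      by_contra hc
      obtain ⟨n, hn0, hnx⟩ := farkas_aux k g x hc
      have hnN : ∀ p ∈ P, n v ≤ n p := by
        intro p hp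
        rw [hT] at hp
        have hhalf : Convex ℚ {w : Fin d → ℚ | n v ≤ n w} :=
          convex_halfSpace_ge ⟨fun a b => map_add n a b, fun c a => map_smul n c a⟩ (n v)
        have hTsub : (T : Set (Fin d → ℚ)) ⊆ {w | n v ≤ n w} := by
          intro w hw
          have hw' : w ∈ T := hw
          have hwt : t (T.equivFin ⟨w, hw'⟩) = w := by simp [ht]
          have h0 := hn0 (T.equivFin ⟨w, hw'⟩)
          rw [hg] at h0
          simp only [hwt] at h0
          rw [map_sub] at h0
          simp only [Set.mem_setOf_eq]
          linarith
        exact convexHull_min hTsub hhalf hp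
      have := hN n hnN
      have hxy : n x = n y - n v := by rw [hx, map_sub]
      rw [hxy] at hnx
      linarith
    obtain ⟨c, hc0, hcx⟩ := hxc
    set s := ∑ j, c j with hs
    have hyvx : y = v + x := by rw [hx]; abel
    by_cases hs0 : s = 0
    · have hc00 : ∀ j ∈ Finset.univ, c j = 0 :=
        (Finset.sum_eq_zero_iff_of_nonneg (fun j _ => hc0 j)).mp hs0
      have hx0 : x = 0 := by
        rw [hcx]
        exact Finset.sum_eq_zero fun j _ => by rw [hc00 j (Finset.mem_univ j), zero_smul]
      exact ⟨v, rfl, x, hyvx, 1, one_pos, by rw [hx0]; simpa⟩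
    · have hspos : 0 < s := lt_of_le_of_ne (Finset.sum_nonneg fun j _ => hc0 j) (Ne.symm hs0)
      set p : Fin d → ℚ := Finset.univ.centerMass c t with hp
      have hpmem : p ∈ convexHull ℚ (T : Set (Fin d → ℚ)) :=
        Finset.centerMass_mem_convexHull _ (fun j _ => hc0 j) (by rw [← hs]; exact hspos)
          (fun j _ => htm j)
      have hpsum : s • p = ∑ j, c j • t j := by
        rw [hp, Finset.centerMass, ← hs, smul_smul, mul_inv_cancel₀ hs0, one_smul]
      have hxsum : x = (∑ j, c j • t j) - s • v := by
        rw [hcx, hg]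
        simp only [smul_sub]
        rw [Finset.sum_sub_distrib, ← Finset.sum_smul, ← hs]
      refine ⟨v, rfl, x, hyvx, (2 * s)⁻¹, by positivity, ?_⟩
      have hconv : Convex ℚ (convexHull ℚ (T : Set (Fin d → ℚ))) := convex_convexHull ℚ _
      have hvT : v ∈ convexHull ℚ (T : Set (Fin d → ℚ)) := by rwa [hT] at hvP
      have hkey : v + (2 * s)⁻¹ • x = (1/2 : ℚ) • p + (1/2 : ℚ) • v := by
        rw [hxsum, ← hpsum]
        rw [smul_sub, smul_smul, smul_smul]
        have e1 : (2 * s)⁻¹ * s = 1 / 2 := by field_simp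
        rw [e1]
        module
      rw [hT, hkey]
      exact hconv hpmem hvT (by norm_num) (by norm_num) (by norm_num)
end
end

section
/- Uniqueness of positive conic decompositions: Let P ⊆ ℚ^d be a polytope with vertex set V, and let ξ ∈ (ℚ^d)^* take pairwise distinct values on the vertices of P. Suppose (f_v)_{v∈V} and (g_v)_{v∈V} are families of functions ℚ^d → ℚ such that (i) Σ_{v∈V} f_v = 1_P = Σ_{v∈V} g_v pointwise; (ii) each family is conic: for every v ∈ V and every t ∈ ℚ^d \ {0}, the values f_v(v + λt) and g_v(v + λt) are constant for λ > 0; and (iii) each family is positive: f_v(v + t) = g_v(v + t) = 0 whenever ξ(t) < 0. Then f_v = g_v for every vertex v. -/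
noncomputable section
open Classical

open scoped BigOperators

/-- Indicator function of a set, with values in `ℚ`. -/
def indicatorQ {d : ℕ} (S : Set (Fin d → ℚ)) (x : Fin d → ℚ) : ℚ :=
  if x ∈ S then 1 else 0

/-- **Uniqueness of positive conic decompositions**: if `ξ` separates the vertices of
a polytope `P`, then any two decompositions `1_P = Σ_v f_v = Σ_v g_v` into functions
that are conic and `ξ`-positive at the respective vertices agree termwise. -/
theorem positive_conic_decomposition_unique {d : ℕ} (hd : 1 ≤ d)
    (P : Set (Fin d → ℚ)) (hP : IsPolytope P)
    (ξ : Module.Dual ℚ (Fin d → ℚ))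
    (hξ : ∀ v w : Fin d → ℚ, IsVertex P v → IsVertex P w → ξ v = ξ w → v = w)
    (f g : (Fin d → ℚ) → (Fin d → ℚ) → ℚ)
    (hfsum : ∀ x, (∑ᶠ v ∈ {v : Fin d → ℚ | IsVertex P v}, f v x) = indicatorQ P x)
    (hgsum : ∀ x, (∑ᶠ v ∈ {v : Fin d → ℚ | IsVertex P v}, g v x) = indicatorQ P x)
    (hfconic : ∀ v, IsVertex P v → ∀ t : Fin d → ℚ, t ≠ 0 →
      ∀ lam mu : ℚ, 0 < lam → 0 < mu → f v (v + lam • t) = f v (v + mu • t))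
    (hgconic : ∀ v, IsVertex P v → ∀ t : Fin d → ℚ, t ≠ 0 →
      ∀ lam mu : ℚ, 0 < lam → 0 < mu → g v (v + lam • t) = g v (v + mu • t))
    (hfpos : ∀ v, IsVertex P v → ∀ t : Fin d → ℚ, ξ t < 0 → f v (v + t) = 0)
    (hgpos : ∀ v, IsVertex P v → ∀ t : Fin d → ℚ, ξ t < 0 → g v (v + t) = 0) :
    ∀ v, IsVertex P v → f v = g v := by
  classical
  obtain ⟨T, hT⟩ := hP
  -- every vertex lies in T
  have hvert_mem : ∀ w, IsVertex P w → w ∈ T := by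
    intro w hw
    obtain ⟨ℓ, hℓ⟩ := hw
    have hwmem : w ∈ ({w} : Set (Fin d → ℚ)) := rfl
    rw [hℓ] at hwmem
    have hTne : T.Nonempty := by
      by_contra hne
      rw [Finset.not_nonempty_iff_eq_empty] at hne
      rw [hT, hne] at hwmem
      simpa using hwmem.1
    obtain ⟨t₀, ht₀T, ht₀max⟩ := T.exists_max_image ℓ hTne
    have hPle : ∀ y ∈ P, ℓ y ≤ ℓ t₀ := by
      intro y hy
      rw [hT] at hy
      have hsub : (T : Set (Fin d → ℚ)) ⊆ {x | ℓ x ≤ ℓ t₀} := fun t ht =>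
        ht₀max t (by exact_mod_cast ht)
      exact convexHull_min hsub (convex_halfSpace_le ℓ.isLinear (ℓ t₀)) hy
    have ht₀P : t₀ ∈ P := by
      rw [hT]; exact subset_convexHull ℚ _ (by exact_mod_cast ht₀T)
    have ht₀w : t₀ ∈ ({w} : Set (Fin d → ℚ)) := by
      rw [hℓ]; exact ⟨ht₀P, hPle⟩
    rw [Set.mem_singleton_iff] at ht₀w
    exact ht₀w ▸ ht₀T
  set V' : Finset (Fin d → ℚ) := T.filter (fun w => IsVertex P w) with hV'
  have hVset : {w : Fin d → ℚ | IsVertex P w} = (V' : Set (Fin d → ℚ)) := by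
    ext w
    simp only [Set.mem_setOf_eq, hV', Finset.coe_filter, Set.mem_setOf_eq, Finset.mem_coe]
    exact ⟨fun h => ⟨hvert_mem w h, h⟩, fun h => h.2⟩
  have hfs : ∀ x, ∑ w ∈ V', f w x = indicatorQ P x := by
    intro x
    rw [← finsum_mem_coe_finset, ← hVset]; exact hfsum x
  have hgs : ∀ x, ∑ w ∈ V', g w x = indicatorQ P x := by
    intro x
    rw [← finsum_mem_coe_finset, ← hVset]; exact hgsum x
  have hsum : ∀ x, ∑ w ∈ V', (f w x - g w x) = 0 := by
    intro x
    rw [Finset.sum_sub_distrib, hfs x, hgs x, sub_self]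
  have hmemV' : ∀ w, IsVertex P w → w ∈ V' := fun w hw =>
    Finset.mem_filter.mpr ⟨hvert_mem w hw, hw⟩
  -- main induction on the number of vertices with smaller ξ-value
  have key : ∀ n : ℕ, ∀ w, IsVertex P w →
      (V'.filter (fun u => ξ u < ξ w)).card = n → ∀ x, f w x - g w x = 0 := by
    intro n
    induction n using Nat.strong_induction_on with
    | _ n ih =>
      intro w hw hcard x
      have hIH : ∀ u, IsVertex P u → ξ u < ξ w → ∀ y, f u y - g u y = 0 := by
        intro u hu hult y
        refine ih (V'.filter (fun z => ξ z < ξ u)).card ?_ u hu rfl y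
        rw [← hcard]
        refine Finset.card_lt_card ?_
        rw [Finset.ssubset_iff_of_subset]
        · exact ⟨u, Finset.mem_filter.mpr ⟨hmemV' u hu, hult⟩,
            fun hc => absurd (Finset.mem_filter.mp hc).2 (lt_irrefl _)⟩
        · intro z hz
          rcases Finset.mem_filter.mp hz with ⟨hzV, hzlt⟩
          exact Finset.mem_filter.mpr ⟨hzV, hzlt.trans hult⟩
      have hzero_at : ∀ y : Fin d → ℚ,
          (∀ u, IsVertex P u → ξ w < ξ u → ξ y < ξ u) → f w y - g w y = 0 := by
        intro y hy
        have hred : ∑ u ∈ V', (f u y - g u y) = f w y - g w y := by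
          refine Finset.sum_eq_single_of_mem w (hmemV' w hw) ?_
          intro u huV' hne
          have hu : IsVertex P u := (Finset.mem_filter.mp huV').2
          rcases lt_trichotomy (ξ u) (ξ w) with hlt | heq | hgt
          · exact hIH u hu hlt y
          · exact absurd (hξ u w hu hw heq) hne
          · have hneg : ξ (y - u) < 0 := by
              have h1 := hy u hu hgt
              have h2 : ξ y - ξ u < 0 := sub_neg.mpr h1
              simpa [map_sub] using h2
            have hf := hfpos u hu (y - u) hneg
            have hg := hgpos u hu (y - u) hneg
            have huy : u + (y - u) = y := by abel
            rw [huy] at hf hg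
            rw [hf, hg, sub_self]
        rw [hsum y] at hred
        exact hred.symm
      by_cases hxw : x = w
      · subst hxw
        exact hzero_at x (fun u _ h => h)
      · have ht : x - w ≠ 0 := sub_ne_zero.mpr hxw
        have hlam : ∃ lam : ℚ, 0 < lam ∧
            ∀ u, IsVertex P u → ξ w < ξ u → ξ (w + lam • (x - w)) < ξ u := by
          by_cases hξt : ξ (x - w) ≤ 0
          · refine ⟨1, one_pos, fun u hu hgt => ?_⟩
            have hv1 : ξ (w + (1 : ℚ) • (x - w)) = ξ w + ξ (x - w) := by
              simp [map_add, map_smul]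
            rw [hv1]
            calc ξ w + ξ (x - w) ≤ ξ w := by linarith
              _ < ξ u := hgt
          · push_neg at hξt
            set S : Finset (Fin d → ℚ) := V'.filter (fun u => ξ w < ξ u) with hS
            by_cases hSne : S.Nonempty
            · obtain ⟨u₀, hu₀S, hu₀min⟩ := S.exists_min_image ξ hSne
              have hu₀gt : ξ w < ξ u₀ := (Finset.mem_filter.mp hu₀S).2
              set ε : ℚ := ξ u₀ - ξ w with hε
              have hεpos : 0 < ε := sub_pos.mpr hu₀gt
              refine ⟨ε / (2 * ξ (x - w)), by positivity, fun u hu hgt => ?_⟩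
              have huS : u ∈ S := Finset.mem_filter.mpr ⟨hmemV' u hu, hgt⟩
              have hle := hu₀min u huS
              have hval : ξ (w + (ε / (2 * ξ (x - w))) • (x - w))
                  = ξ w + (ε / (2 * ξ (x - w))) * ξ (x - w) := by
                simp [map_add, map_smul, smul_eq_mul]
              rw [hval]
              have h2gen : ∀ c : ℚ, c ≠ 0 → (ε / (2 * c)) * c = ε / 2 := by
                intro c hc; field_simp
              have h2 : (ε / (2 * ξ (x - w))) * ξ (x - w) = ε / 2 :=
                h2gen _ (ne_of_gt hξt)
              rw [h2]
              have h3 : ξ w + ε / 2 < ξ u₀ := by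
                rw [hε]; linarith
              linarith
            · refine ⟨1, one_pos, fun u hu hgt => ?_⟩
              exact absurd ⟨u, Finset.mem_filter.mpr ⟨hmemV' u hu, hgt⟩⟩ hSne
        obtain ⟨lam, hlampos, hlamprop⟩ := hlam
        have hfx : f w x = f w (w + lam • (x - w)) := by
          have h1 : f w (w + (1 : ℚ) • (x - w)) = f w (w + lam • (x - w)) :=
            hfconic w hw (x - w) ht 1 lam one_pos hlampos
          simpa using h1
        have hgx : g w x = g w (w + lam • (x - w)) := by
          have h1 : g w (w + (1 : ℚ) • (x - w)) = g w (w + lam • (x - w)) :=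
            hgconic w hw (x - w) ht 1 lam one_pos hlampos
          simpa using h1
        rw [hfx, hgx]
        exact hzero_at (w + lam • (x - w)) hlamprop
  intro v hv
  funext x
  have hkey := key (V'.filter (fun u => ξ u < ξ v)).card v hv rfl x
  linarith
end
end
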